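/- Consider the lower-bound construction with integers u > d ≥ 1 and real 0 < α < 1, and set τ := (1-α)·d/u. If g ∈ H satisfies |{i : g(x_i) = -1 and h(x_i) = -1}| ≤ d/2, then er_{D_h}(g) ≥ τ + α·d/(2u). -/
import Mathlib


open MeasureTheory

abbrev Label : Type := ↥({-1, 1} : Finset ℤ)

def lneg : Label := ⟨-1, by decide⟩
def lpos : Label := ⟨1, by decide⟩

noncomputable def erD {X : Type*} [MeasurableSpace X]
    (D : Measure (X × Label)) (h : X → Label) : ℝ :=
  (D {p | h p.1 ≠ p.2}).toReal

/-- The distribution `D_h` of the lower-bound construction: every example is labeled `1`;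
a point `i` with `h i = -1` has probability `(1-α)/u`, and a point `i` with `h i = 1`
has probability `(1-(1-α)d/u)/(u-d)`. -/
noncomputable def Dh (u d : ℕ) (α : ℝ) (h : Fin u → Label) : Measure (Fin u × Label) :=
  Measure.sum fun i : Fin u =>
    (ENNReal.ofReal (if h i = lneg then (1 - α) / (u : ℝ)
        else (1 - (1 - α) * (d : ℝ) / (u : ℝ)) / ((u : ℝ) - (d : ℝ)))) •
      Measure.dirac (i, lpos)

/-- Membership in the hypothesis class of the lower-bound construction:
`h` takes the value `-1` on exactly `d` points. -/
def memH (u d : ℕ) (h : Fin u → Label) : Prop :=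
  (Finset.univ.filter fun i => h i = lneg).card = d

lemma ne_lpos_iff (l : Label) : l ≠ lpos ↔ l = lneg := by
  revert l; decide

/-- if a hypothesis `g ∈ H` agrees with `h` on at most `d/2` of the
`-1`-points of `h`, then its error under `D_h` is at least `τ + α·d/(2u)` (Observation 2). -/
theorem fail_implies_large_error (u d : ℕ) (α : ℝ) (h g : Fin u → Label)
    (hd : 1 ≤ d) (hdu : d < u) (hα0 : 0 < α) (hα1 : α < 1)
    (hh : memH u d h) (hg : memH u d g)
    (hfail : ((Finset.univ.filter fun i => g i = lneg ∧ h i = lneg).card : ℝ) ≤ (d : ℝ) / 2) :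
    (1 - α) * (d : ℝ) / (u : ℝ) + α * (d : ℝ) / (2 * (u : ℝ)) ≤ erD (Dh u d α h) g := by
  have hu0 : (0:ℝ) < u := by
    have : (0:ℕ) < u := lt_of_le_of_lt (Nat.zero_le d) hdu
    exact_mod_cast this
  have hdu' : (d:ℝ) < u := by exact_mod_cast hdu
  have hd0 : (0:ℝ) < d := by
    have : (0:ℕ) < d := hd
    exact_mod_cast this
  have hud : (0:ℝ) < (u:ℝ) - (d:ℝ) := by linarith
  set p : ℝ := (1 - α) / (u : ℝ) with hp
  set q : ℝ := (1 - (1 - α) * (d : ℝ) / (u : ℝ)) / ((u : ℝ) - (d : ℝ)) with hq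
  have hp0 : 0 ≤ p := by
    apply div_nonneg <;> linarith
  have hq0 : 0 ≤ q := by
    apply div_nonneg
    · have h1 : (1-α) * (d:ℝ) / u < 1 := by
        rw [div_lt_one hu0]; nlinarith
      linarith
    · linarith
  have hqeq : q = p + α / ((u:ℝ) - (d:ℝ)) := by
    rw [hp, hq]
    field_simp
    ring
  have hmeas : MeasurableSet {pt : Fin u × Label | g pt.1 ≠ pt.2} :=
    (Set.toFinite _).measurableSet
  have key : (Dh u d α h) {pt : Fin u × Label | g pt.1 ≠ pt.2}
      = ∑ i : Fin u, ENNReal.ofReal (if g i = lneg then (if h i = lneg then p else q) else 0) := by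
    rw [Dh, Measure.sum_apply _ hmeas, tsum_fintype]
    refine Finset.sum_congr rfl fun i _ => ?_
    rw [Measure.smul_apply, smul_eq_mul, Measure.dirac_apply' _ hmeas]
    by_cases hgi : g i = lneg
    · have hmem : (i, lpos) ∈ {pt : Fin u × Label | g pt.1 ≠ pt.2} := by
        simp only [Set.mem_setOf_eq]
        exact (ne_lpos_iff (g i)).2 hgi
      rw [Set.indicator_of_mem hmem]
      simp [hgi, hp, hq]
    · have hgp : g i = lpos := not_not.mp fun hne => hgi ((ne_lpos_iff _).mp hne)
      have hmem : (i, lpos) ∉ {pt : Fin u × Label | g pt.1 ≠ pt.2} := by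
        simp [Set.mem_setOf_eq, hgp]
      rw [Set.indicator_of_notMem hmem]
      simp [hgi]
  have hnn : ∀ i ∈ Finset.univ, (0:ℝ) ≤ if g i = lneg then (if h i = lneg then p else q) else 0 := by
    intro i _
    split_ifs <;> first | exact hp0 | exact hq0 | norm_num
  have erD_eq : erD (Dh u d α h) g
      = ∑ i : Fin u, if g i = lneg then (if h i = lneg then p else q) else 0 := by
    rw [erD, key, ← ENNReal.ofReal_sum_of_nonneg hnn,
      ENNReal.toReal_ofReal (Finset.sum_nonneg hnn)]
  rw [erD_eq, ← Finset.sum_filter, Finset.sum_ite, Finset.sum_const, Finset.sum_const,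
    Finset.filter_filter, Finset.filter_filter, nsmul_eq_mul, nsmul_eq_mul]
  set a := (Finset.univ.filter fun i => g i = lneg ∧ h i = lneg).card with ha
  set b := (Finset.univ.filter fun i => g i = lneg ∧ ¬ h i = lneg).card with hb
  have hab : a + b = d := by
    rw [ha, hb, ← Finset.filter_filter, ← Finset.filter_filter,
      Finset.card_filter_add_card_filter_not]
    exact hg
  have habR : (a:ℝ) + (b:ℝ) = d := by exact_mod_cast hab
  have hbR : (d:ℝ)/2 ≤ (b:ℝ) := by linarith [hfail]
  have h1 : α/(u:ℝ) ≤ α/((u:ℝ)-(d:ℝ)) := by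
    apply div_le_div_of_nonneg_left (le_of_lt hα0) hud
    linarith
  have h2 : ((d:ℝ)/2) * (α/(u:ℝ)) ≤ (b:ℝ) * (α/((u:ℝ)-(d:ℝ))) := by
    exact mul_le_mul hbR h1 (by positivity) (Nat.cast_nonneg b)
  have hsum : (a:ℝ)*p + (b:ℝ)*q = (d:ℝ)*p + (b:ℝ)*(α/((u:ℝ)-(d:ℝ))) := by
    have haR : (a:ℝ) = (d:ℝ) - b := by linarith
    rw [haR, hqeq]; ring
  have hdp : (d:ℝ)*p = (1-α)*(d:ℝ)/(u:ℝ) := by rw [hp]; ring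
  have hg2 : α*(d:ℝ)/(2*(u:ℝ)) = ((d:ℝ)/2)*(α/(u:ℝ)) := by ring
  linarith [hsum, hdp, h2]
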